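/- arXiv:2301.03069 — 3 statements merged into one kernel-verified Lean document; each statement's English description precedes it below -/
import Mathlib

section
/- For every k ≥ 0 and every z with Im z ≠ 0, (2π)^{-1/2} ∫_ℝ H_k(v) e^{-v^2/2}/(v - z) dv = (-1)^k Z^{(k)}(z), where H_k is the k-th probabilists' Hermite polynomial and Z is the plasma dispersion function. -/
open MeasureTheory Real Complex

/-- The plasma dispersion function. -/
noncomputable def plasmaZ (ζ : ℂ) : ℂ :=
  ((Real.sqrt (2 * π) : ℂ))⁻¹ * ∫ v : ℝ, Complex.exp (-(v:ℂ)^2 / 2) / ((v:ℂ) - ζ)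

section Aux

open Polynomial Metric Filter

lemma im_le_norm_sub (v : ℝ) (z : ℂ) : |z.im| ≤ ‖(v:ℂ) - z‖ := by
  have h : ((v:ℂ) - z).im = -z.im := by simp
  calc |z.im| = |((v:ℂ) - z).im| := by rw [h, abs_neg]
    _ ≤ ‖(v:ℂ) - z‖ := by
        exact Complex.abs_im_le_norm _

lemma sub_ne_zero_of_im (v : ℝ) {z : ℂ} (hz : z.im ≠ 0) : (v:ℂ) - z ≠ 0 := by
  intro h
  have : |z.im| ≤ 0 := by simpa [h] using im_le_norm_sub v z
  exact hz (abs_eq_zero.mp (le_antisymm this (abs_nonneg _)))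

lemma norm_cexp_gauss (v : ℝ) : ‖Complex.exp (-(v:ℂ)^2 / 2)‖ = Real.exp (-v^2 / 2) := by
  have h : (-(v:ℂ)^2 / 2) = ((-v^2/2 : ℝ) : ℂ) := by push_cast; ring
  rw [h, Complex.norm_exp, Complex.ofReal_re]

lemma integrable_abs_pow_gauss (n : ℕ) :
    Integrable (fun x : ℝ => |x| ^ n * Real.exp (-x ^ 2 / 2)) := by
  have hb : (0:ℝ) < 1/2 := by norm_num
  have h1 : Integrable (fun x : ℝ => Real.exp (-(1/2) * x ^ 2)) := integrable_exp_neg_mul_sq hb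
  have h2 : Integrable (fun x : ℝ => x ^ (2*n) * Real.exp (-(1/2) * x ^ 2)) := by
    have h := integrable_rpow_mul_exp_neg_mul_sq hb (s := ((2*n : ℕ) : ℝ))
      (by have : (0:ℝ) ≤ ((2*n:ℕ):ℝ) := Nat.cast_nonneg _; linarith)
    simp_rw [Real.rpow_natCast] at h
    exact h
  refine ((h1.add h2).mono' ?_ ?_)
  · exact (((_root_.continuous_abs.pow n).mul
      (Real.continuous_exp.comp (by continuity))).aestronglyMeasurable)
  · filter_upwards with x
    have hexp : Real.exp (-x^2/2) = Real.exp (-(1/2)*x^2) := by ring_nf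
    have hxp : |x| ^ n ≤ 1 + x ^ (2*n) := by
      have hx2 : x ^ (2*n) = |x| ^ (2*n) := by
        rw [← _root_.abs_pow]
        exact (_root_.abs_of_nonneg (by rw [pow_mul]; positivity)).symm
      rcases le_total (|x|) 1 with h | h
      · have h' : |x| ^ n ≤ 1 := pow_le_one₀ (abs_nonneg x) h
        nlinarith [pow_nonneg (abs_nonneg x) (2*n)]
      · have h' : |x| ^ n ≤ |x| ^ (2*n) := pow_le_pow_right₀ h (by omega)
        nlinarith
    have he : (0:ℝ) < Real.exp (-(1/2)*x^2) := Real.exp_pos _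
    simp only [Pi.add_apply]
    rw [Real.norm_eq_abs, _root_.abs_of_nonneg (by positivity), hexp]
    nlinarith [pow_nonneg (abs_nonneg x) n]

lemma continuous_poly_gauss (p : Polynomial ℤ) :
    Continuous (fun v : ℝ => (aeval (v:ℂ) p) * Complex.exp (-(v:ℂ)^2 / 2)) :=
  ((p.continuous_aeval).comp Complex.continuous_ofReal).mul
    (Complex.continuous_exp.comp (by continuity))

lemma integrable_poly_gauss (p : Polynomial ℤ) :
    Integrable (fun v : ℝ => (aeval (v:ℂ) p) * Complex.exp (-(v:ℂ)^2 / 2)) := by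
  induction p using Polynomial.induction_on' with
  | add p q hp hq =>
      exact (hp.add hq).congr (by filter_upwards with v; simp [add_mul])
  | monomial n a =>
      refine (((integrable_abs_pow_gauss n).const_mul ‖(a:ℂ)‖).mono'
        ((continuous_poly_gauss _).aestronglyMeasurable) ?_)
      filter_upwards with v
      rw [norm_mul, norm_cexp_gauss]
      have h : ‖(aeval (v:ℂ) (Polynomial.monomial n a))‖ = ‖(a:ℂ)‖ * |v| ^ n := by
        simp [Polynomial.aeval_monomial, norm_mul, norm_pow, Complex.norm_real,
          Real.norm_eq_abs, Complex.norm_intCast]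
      rw [h]
      exact le_of_eq (by ring)

lemma continuous_poly_gauss_div (p : Polynomial ℤ) (m : ℕ) {z : ℂ} (hz : z.im ≠ 0) :
    Continuous (fun v : ℝ =>
      (aeval (v:ℂ) p) * Complex.exp (-(v:ℂ)^2 / 2) / ((v:ℂ) - z) ^ m) :=
  (continuous_poly_gauss p).div
    ((Complex.continuous_ofReal.sub continuous_const).pow m)
    (fun v => pow_ne_zero _ (sub_ne_zero_of_im v hz))

lemma integrable_poly_gauss_div (p : Polynomial ℤ) (m : ℕ) {z : ℂ} (hz : z.im ≠ 0) :
    Integrable (fun v : ℝ =>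
      (aeval (v:ℂ) p) * Complex.exp (-(v:ℂ)^2 / 2) / ((v:ℂ) - z) ^ m) := by
  have h0 : 0 < |z.im| := abs_pos.mpr hz
  refine (((integrable_poly_gauss p).norm.const_mul ((|z.im| ^ m)⁻¹)).mono'
    ((continuous_poly_gauss_div p m hz).aestronglyMeasurable) ?_)
  filter_upwards with v
  rw [norm_div, norm_pow]
  have hbp : |z.im| ^ m ≤ ‖(v:ℂ) - z‖ ^ m := pow_le_pow_left₀ h0.le (im_le_norm_sub v z) m
  have hbp0 : 0 < |z.im| ^ m := pow_pos h0 m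
  calc ‖(aeval (v:ℂ) p) * Complex.exp (-(v:ℂ)^2/2)‖ / ‖(v:ℂ) - z‖ ^ m
      ≤ ‖(aeval (v:ℂ) p) * Complex.exp (-(v:ℂ)^2/2)‖ / |z.im| ^ m :=
        div_le_div_of_nonneg_left (norm_nonneg _) hbp0 hbp
    _ = (|z.im| ^ m)⁻¹ * ‖(aeval (v:ℂ) p) * Complex.exp (-(v:ℂ)^2/2)‖ := by
        rw [div_eq_inv_mul]


lemma hasDerivAt_integral_poly_gauss (p : Polynomial ℤ) {z : ℂ} (hz : z.im ≠ 0) :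
    HasDerivAt
      (fun w : ℂ => ∫ v : ℝ, (aeval (v:ℂ) p) * Complex.exp (-(v:ℂ)^2 / 2) / ((v:ℂ) - w))
      (∫ v : ℝ, (aeval (v:ℂ) p) * Complex.exp (-(v:ℂ)^2 / 2) / ((v:ℂ) - z) ^ 2) z := by
  have h0 : 0 < |z.im| := abs_pos.mpr hz
  set ε : ℝ := |z.im| / 2 with hεdef
  have hε : 0 < ε := by positivity
  have him : ∀ w ∈ ball z ε, ε ≤ |w.im| := by
    intro w hw
    have h1 : |z.im - w.im| ≤ ‖z - w‖ := by
      have := Complex.abs_im_le_norm (z - w)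
      simpa [Complex.sub_im] using this
    have h2 : ‖z - w‖ < ε := by
      have := mem_ball.mp hw
      rwa [dist_comm, Complex.dist_eq] at this
    have h3 := abs_sub_abs_le_abs_sub z.im w.im
    linarith
  have himne : ∀ w ∈ ball z ε, w.im ≠ 0 := by
    intro w hw h
    have := him w hw
    rw [h] at this
    simp at this
    linarith
  have hnorm : ∀ w ∈ ball z ε, ∀ v : ℝ, ε ≤ ‖(v:ℂ) - w‖ :=
    fun w hw v => (him w hw).trans (im_le_norm_sub v w)
  have key := hasDerivAt_integral_of_dominated_loc_of_deriv_le (μ := volume) (x₀ := z)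
    (F := fun (w : ℂ) (v : ℝ) => (aeval (v:ℂ) p) * Complex.exp (-(v:ℂ)^2 / 2) / ((v:ℂ) - w))
    (F' := fun (w : ℂ) (v : ℝ) =>
      (aeval (v:ℂ) p) * Complex.exp (-(v:ℂ)^2 / 2) / ((v:ℂ) - w) ^ 2)
    (bound := fun v : ℝ => (ε ^ 2)⁻¹ * ‖(aeval (v:ℂ) p) * Complex.exp (-(v:ℂ)^2 / 2)‖)
    (ball_mem_nhds z hε) ?_ ?_ ?_ ?_ ?_ ?_
  · exact key.2
  · have hopen : ∀ᶠ w in nhds z, w.im ≠ 0 := by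
      have ho : IsOpen {w : ℂ | w.im ≠ 0} :=
        isOpen_compl_singleton.preimage Complex.continuous_im
      exact ho.mem_nhds hz
    filter_upwards [hopen] with w hw
    simpa using (continuous_poly_gauss_div p 1 hw).aestronglyMeasurable
  · simpa using integrable_poly_gauss_div p 1 hz
  · exact (continuous_poly_gauss_div p 2 hz).aestronglyMeasurable
  · filter_upwards with v
    intro w hw
    rw [norm_div, norm_pow]
    have h1 := hnorm w hw v
    have h2 : ε ^ 2 ≤ ‖(v:ℂ) - w‖ ^ 2 := pow_le_pow_left₀ hε.le h1 2
    calc ‖(aeval (v:ℂ) p) * Complex.exp (-(v:ℂ)^2/2)‖ / ‖(v:ℂ) - w‖ ^ 2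
        ≤ ‖(aeval (v:ℂ) p) * Complex.exp (-(v:ℂ)^2/2)‖ / ε ^ 2 :=
          div_le_div_of_nonneg_left (norm_nonneg _) (by positivity) h2
      _ = (ε ^ 2)⁻¹ * ‖(aeval (v:ℂ) p) * Complex.exp (-(v:ℂ)^2/2)‖ := by
          rw [div_eq_inv_mul]
  · exact (integrable_poly_gauss p).norm.const_mul _
  · filter_upwards with v
    intro w hw
    have hne : (v:ℂ) - w ≠ 0 := sub_ne_zero_of_im v (himne w hw)
    have h1 : HasDerivAt (fun w : ℂ => (v:ℂ) - w) (-1) w := by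
      simpa using (hasDerivAt_id w).const_sub ((v:ℂ))
    have h2 := h1.inv hne
    have h3 := h2.const_mul ((aeval (v:ℂ) p) * Complex.exp (-(v:ℂ)^2 / 2))
    simp only [div_eq_mul_inv]
    refine h3.congr_deriv ?_
    field_simp

lemma integral_div_sq_eq (k : ℕ) {z : ℂ} (hz : z.im ≠ 0) :
    (∫ v : ℝ, (aeval (v:ℂ) (hermite k)) * Complex.exp (-(v:ℂ)^2 / 2) / ((v:ℂ) - z) ^ 2)
      = -∫ v : ℝ, (aeval (v:ℂ) (hermite (k+1))) * Complex.exp (-(v:ℂ)^2 / 2) / ((v:ℂ) - z) := by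
  set t1 : ℝ → ℂ :=
    fun v => (aeval (v:ℂ) (hermite (k+1))) * Complex.exp (-(v:ℂ)^2/2) / ((v:ℂ) - z) with ht1
  set t2 : ℝ → ℂ :=
    fun v => (aeval (v:ℂ) (hermite k)) * Complex.exp (-(v:ℂ)^2/2) / ((v:ℂ) - z)^2 with ht2
  have hint1 : Integrable t1 := by
    simpa [ht1] using integrable_poly_gauss_div (hermite (k+1)) 1 hz
  have hint2 : Integrable t2 := integrable_poly_gauss_div (hermite k) 2 hz
  have hzero : (∫ v : ℝ, (-(t1 v) - t2 v)) = 0 := by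
    refine integral_eq_zero_of_hasDerivAt_of_integrable
      (f := fun v : ℝ =>
        (aeval (v:ℂ) (hermite k)) * Complex.exp (-(v:ℂ)^2/2) / ((v:ℂ) - z)) ?_
      (hint1.neg.sub hint2)
      (by simpa using integrable_poly_gauss_div (hermite k) 1 hz)
    intro v
    have hne : (v:ℂ) - z ≠ 0 := sub_ne_zero_of_im v hz
    have hA : HasDerivAt (fun w : ℂ => aeval w (hermite k))
        (aeval ((v:ℂ)) (derivative (hermite k))) ((v:ℂ)) :=
      Polynomial.hasDerivAt_aeval (hermite k) ((v:ℂ))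
    have hu : HasDerivAt (fun w : ℂ => -w^2/2) (-(v:ℂ)) ((v:ℂ)) := by
      have h := ((hasDerivAt_pow 2 ((v:ℂ))).neg).div_const 2
      exact h.congr_deriv (by push_cast; ring)
    have hB := hu.cexp
    have hprod := hA.mul hB
    have hinv : HasDerivAt (fun w : ℂ => (w - z)⁻¹) (-1 / ((v:ℂ) - z)^2) ((v:ℂ)) := by
      have := ((hasDerivAt_id ((v:ℂ))).sub_const z).inv hne
      exact this.congr_deriv (by simp)
    have hfull := (hprod.mul hinv).comp_ofReal
    simp only [div_eq_mul_inv]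
    refine hfull.congr_deriv ?_
    have hsucc : aeval ((v:ℂ)) (hermite (k+1))
        = (v:ℂ) * aeval ((v:ℂ)) (hermite k) - aeval ((v:ℂ)) (derivative (hermite k)) := by
      rw [hermite_succ]
      simp
    simp only [ht1, ht2, div_eq_mul_inv, hsucc, Pi.mul_apply]
    field_simp
    ring
  have h5 : (∫ v : ℝ, (-(t1 v) - t2 v)) = (∫ v : ℝ, -(t1 v)) - ∫ v : ℝ, t2 v :=
    integral_sub hint1.neg hint2
  rw [h5, integral_neg] at hzero
  have : (∫ v : ℝ, t2 v) = -∫ v : ℝ, t1 v := by linear_combination -hzero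
  simpa [ht1, ht2] using this

end Aux

/-- Integrating the `k`-th probabilists' Hermite polynomial against the Cauchy–Gaussian
kernel gives the `k`-th derivative of the plasma dispersion function. -/
theorem hermite_cauchy_gaussian_eq_iteratedDeriv (k : ℕ) (z : ℂ) (hz : z.im ≠ 0) :
    ((Real.sqrt (2 * π) : ℂ))⁻¹ *
        ∫ v : ℝ, ((Polynomial.hermite k).aeval (v:ℂ)) * Complex.exp (-(v:ℂ)^2 / 2) / ((v:ℂ) - z)
      = (-1)^k * iteratedDeriv k plasmaZ z := by
  induction k generalizing z hz with
  | zero =>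
      simp [Polynomial.hermite_zero, plasmaZ, iteratedDeriv_zero]
  | succ k ih =>
      set c : ℂ := ((Real.sqrt (2 * π) : ℂ))⁻¹ with hc
      have hsq : ((-1:ℂ))^k * ((-1:ℂ))^k = 1 := by
        rw [← pow_add, Even.neg_one_pow ⟨k, by ring⟩]
      have hopen : ∀ᶠ w in nhds z, w.im ≠ 0 := by
        have ho : IsOpen {w : ℂ | w.im ≠ 0} :=
          isOpen_compl_singleton.preimage Complex.continuous_im
        exact ho.mem_nhds hz
      have heq : (iteratedDeriv k plasmaZ) =ᶠ[nhds z]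
          (fun w => (-1:ℂ)^k * (c * ∫ v : ℝ,
            ((Polynomial.hermite k).aeval (v:ℂ)) * Complex.exp (-(v:ℂ)^2 / 2) / ((v:ℂ) - w))) := by
        filter_upwards [hopen] with w hw
        have h := ih w hw
        rw [h, ← mul_assoc, hsq, one_mul]
      have hD : HasDerivAt
          (fun w => c * ∫ v : ℝ,
            ((Polynomial.hermite k).aeval (v:ℂ)) * Complex.exp (-(v:ℂ)^2 / 2) / ((v:ℂ) - w))
          (c * ∫ v : ℝ,
            ((Polynomial.hermite k).aeval (v:ℂ)) * Complex.exp (-(v:ℂ)^2 / 2) / ((v:ℂ) - z) ^ 2)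
          z := (hasDerivAt_integral_poly_gauss (Polynomial.hermite k) hz).const_mul c
      rw [iteratedDeriv_succ, heq.deriv_eq, deriv_const_mul_field, hD.deriv,
        integral_div_sq_eq k hz]
      rw [pow_succ]
      linear_combination (-(c * ∫ v : ℝ,
        ((Polynomial.hermite (k+1)).aeval (v:ℂ)) * Complex.exp (-(v:ℂ)^2 / 2) / ((v:ℂ) - z))) * hsq
end

section
/- For ζ in the upper half-plane, |Z(ζ)| ≤ √(π/2), where Z is the plasma dispersion function, with the supremum value √(π/2) attained only in the boundary limit ζ → 0. -/
open MeasureTheory Real Complex Filter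

open Set Topology

lemma aux_integrableOn_cexp {c : ℂ} (hc : c.re < 0) :
    IntegrableOn (fun t : ℝ => Complex.exp (c * t)) (Ioi 0) := by
  refine Integrable.mono' ((exp_neg_integrableOn_Ioi 0 (show (0:ℝ) < -c.re by linarith)))
    ((Complex.continuous_exp.comp (continuous_const.mul Complex.continuous_ofReal)).aestronglyMeasurable) ?_
  filter_upwards with t
  rw [Complex.norm_exp]
  simp [Complex.mul_re, mul_comm]

lemma aux_integral_cexp {c : ℂ} (hc : c.re < 0) :
    ∫ t in Ioi (0:ℝ), Complex.exp (c * t) = -c⁻¹ := by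
  have hc0 : c ≠ 0 := fun h => by simp [h] at hc
  have hderiv : ∀ x ∈ Ici (0:ℝ),
      HasDerivAt (fun t : ℝ => c⁻¹ * Complex.exp (c * t)) (Complex.exp (c * x)) x := by
    intro x _
    have h1 : HasDerivAt (fun t : ℝ => Complex.exp (c * t)) (c * Complex.exp (c * x)) x := by
      simpa [mul_comm] using (((hasDerivAt_id (x:ℂ)).const_mul c).cexp.comp_ofReal)
    have := h1.const_mul c⁻¹
    simpa [← mul_assoc, inv_mul_cancel₀ hc0] using this
  have htend : Tendsto (fun t : ℝ => c⁻¹ * Complex.exp (c * t)) atTop (𝓝 0) := by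
    rw [tendsto_zero_iff_norm_tendsto_zero]
    have heq : (fun t : ℝ => ‖c⁻¹ * Complex.exp (c * t)‖)
        = fun t : ℝ => ‖c⁻¹‖ * Real.exp (-(-c.re * t)) := by
      ext t
      rw [norm_mul, Complex.norm_exp]
      simp [Complex.mul_re]
    rw [heq]
    simpa using (tendsto_exp_neg_atTop_nhds_zero.comp
      (tendsto_id.const_mul_atTop (show (0:ℝ) < -c.re by linarith))).const_mul ‖c⁻¹‖
  have := integral_Ioi_of_hasDerivAt_of_tendsto' hderiv (aux_integrableOn_cexp hc) htend
  simpa using this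

lemma aux_re1 (ζ : ℂ) (v : ℝ) : (-(Complex.I * ((v:ℂ) - ζ))).re = -ζ.im := by
  simp [Complex.mul_re]

lemma aux_re2 (ζ : ℂ) (v t : ℝ) : (-(Complex.I * ((v:ℂ) - ζ)) * (t:ℂ)).re = -ζ.im * t := by
  simp [Complex.mul_re, Complex.mul_im]

lemma aux_norm_cexp (z : ℂ) : ‖Complex.exp z‖ = Real.exp z.re := by
  rw [Complex.norm_exp]

lemma plasmaZ_repr {ζ : ℂ} (hζ : 0 < ζ.im) :
    plasmaZ ζ = Complex.I * ∫ t in Ioi (0:ℝ),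
      Complex.exp (Complex.I * ζ * t - (t:ℂ) ^ 2 / 2) := by
  have hcre : ∀ v : ℝ, (-(Complex.I * ((v:ℂ) - ζ))).re < 0 := by
    intro v; rw [aux_re1]; linarith
  have hv : ∀ v : ℝ, (v:ℂ) - ζ ≠ 0 := by
    intro v h
    have : ((v:ℂ) - ζ).im = 0 := by rw [h]; simp
    simp at this; linarith
  have key : ∀ v : ℝ, Complex.exp (-(v:ℂ)^2 / 2) / ((v:ℂ) - ζ)
      = ∫ t in Ioi (0:ℝ), Complex.I * Complex.exp (-(v:ℂ)^2/2)
          * Complex.exp (-(Complex.I * ((v:ℂ) - ζ)) * t) := by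
    intro v
    rw [MeasureTheory.integral_const_mul, aux_integral_cexp (hcre v)]
    rw [inv_neg, neg_neg, mul_inv, Complex.inv_I]
    field_simp
    ring_nf
    simp [Complex.I_sq]
  have hInt : Integrable (Function.uncurry fun (v t : ℝ) => Complex.I * Complex.exp (-(v:ℂ)^2/2)
      * Complex.exp (-(Complex.I * ((v:ℂ) - ζ)) * t))
      (volume.prod (volume.restrict (Ioi 0))) := by
    have h1 : Integrable (fun v : ℝ => Real.exp (-v^2/2)) := by
      have := integrable_exp_neg_mul_sq (show (0:ℝ) < 1/2 by norm_num)
      exact this.congr (Eventually.of_forall fun t => by ring_nf)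
    have h2 : Integrable (fun t : ℝ => Real.exp (-ζ.im * t)) (volume.restrict (Ioi 0)) :=
      exp_neg_integrableOn_Ioi 0 hζ
    refine (h1.mul_prod h2).mono' ?_ ?_
    · apply Continuous.aestronglyMeasurable
      fun_prop
    · filter_upwards with p
      rw [Function.uncurry]
      rw [norm_mul, norm_mul, Complex.norm_I, one_mul, aux_norm_cexp, aux_norm_cexp, aux_re2]
      have : (-(p.1:ℂ)^2/2).re = -p.1^2/2 := by
        push_cast
        simp [← Complex.ofReal_pow, ← Complex.ofReal_div]
      rw [this]
  have swap := MeasureTheory.integral_integral_swap (f := fun (v t : ℝ) =>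
    Complex.I * Complex.exp (-(v:ℂ)^2/2) * Complex.exp (-(Complex.I * ((v:ℂ) - ζ)) * t)) hInt
  have inner : ∀ t : ℝ, (∫ v : ℝ, Complex.I * Complex.exp (-(v:ℂ)^2/2)
        * Complex.exp (-(Complex.I * ((v:ℂ) - ζ)) * t))
      = Complex.I * ((Real.sqrt (2*π) : ℝ):ℂ)
          * Complex.exp (Complex.I * ζ * t - (t:ℂ)^2/2) := by
    intro t
    have h := fourierIntegral_gaussian (b := (1/2:ℂ)) (by norm_num) (-(t:ℂ))
    have step1 : (∫ v : ℝ, Complex.I * Complex.exp (-(v:ℂ)^2/2)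
          * Complex.exp (-(Complex.I * ((v:ℂ) - ζ)) * t))
        = (Complex.I * Complex.exp (Complex.I * ζ * t)) *
            ∫ v : ℝ, Complex.exp (Complex.I * (-(t:ℂ)) * v) * Complex.exp (-(1/2:ℂ) * (v:ℂ)^2) := by
      rw [← MeasureTheory.integral_const_mul]
      congr 1
      funext v
      have e : ∀ a b : ℂ, Complex.exp a * Complex.exp b = Complex.exp (a + b) :=
        fun a b => (Complex.exp_add a b).symm
      simp only [mul_assoc, e]
      congr 1
      ring
    rw [step1, h]
    have h1 : ((π:ℂ)/(1/2:ℂ)) = ((2*π:ℝ):ℂ) := by push_cast; ring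
    have h2 : ((2*π:ℝ):ℂ)^(1/2:ℂ) = ((Real.sqrt (2*π):ℝ):ℂ) := by
      rw [Real.sqrt_eq_rpow, Complex.ofReal_cpow (by positivity)]
      norm_num
    rw [h1, h2]
    rw [show (Complex.I * ζ * t - (t:ℂ)^2/2) = (Complex.I * ζ * t) + (-(-(t:ℂ))^2/(4 * (1/2:ℂ))) from by ring,
      Complex.exp_add]
    ring
  have hs : ((Real.sqrt (2*π) : ℝ):ℂ) ≠ 0 :=
    Complex.ofReal_ne_zero.mpr (Real.sqrt_ne_zero'.mpr (by positivity))
  unfold plasmaZ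
  simp only [key]
  rw [swap]
  simp only [inner]
  rw [MeasureTheory.integral_const_mul]
  have hmul : ∀ X : ℂ, ((Real.sqrt (2*π):ℝ):ℂ)⁻¹ * (Complex.I * ((Real.sqrt (2*π):ℝ):ℂ) * X)
      = Complex.I * X := by
    intro X
    calc ((Real.sqrt (2*π):ℝ):ℂ)⁻¹ * (Complex.I * ((Real.sqrt (2*π):ℝ):ℂ) * X)
        = (((Real.sqrt (2*π):ℝ):ℂ)⁻¹ * ((Real.sqrt (2*π):ℝ):ℂ)) * (Complex.I * X) := by ring
      _ = Complex.I * X := by rw [inv_mul_cancel₀ hs, one_mul]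
  exact hmul _

lemma aux_gauss_int : Integrable (fun t : ℝ => Real.exp (-t^2/2)) := by
  have := integrable_exp_neg_mul_sq (show (0:ℝ) < 1/2 by norm_num)
  exact this.congr (Eventually.of_forall fun t => by ring_nf)

lemma aux_gauss_val : ∫ t in Ioi (0:ℝ), Real.exp (-t^2/2) = Real.sqrt (π/2) := by
  have h := integral_gaussian_Ioi (1/2)
  have he : ∀ t : ℝ, Real.exp (-(1/2) * t^2) = Real.exp (-t^2/2) := fun t => by ring_nf
  rw [setIntegral_congr_fun measurableSet_Ioi (fun t _ => (he t).symm), h]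
  rw [show π / (1/2:ℝ) = 4 * (π/2) by ring, Real.sqrt_mul (by norm_num),
    show Real.sqrt 4 = 2 by rw [show (4:ℝ) = 2^2 by norm_num, Real.sqrt_sq (by norm_num)]]
  ring

lemma aux_norm_integrand (ζ : ℂ) (t : ℝ) :
    ‖Complex.exp (Complex.I * ζ * t - (t:ℂ)^2/2)‖ = Real.exp (-ζ.im * t - t^2/2) := by
  rw [aux_norm_cexp]
  congr 1
  have h1 : ((t:ℂ)^2/2).re = t^2/2 := by
    rw [show ((t:ℂ)^2/2) = (((t^2/2 : ℝ)):ℂ) by push_cast; ring]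
    exact Complex.ofReal_re _
  rw [Complex.sub_re, h1]
  simp [Complex.mul_re, Complex.mul_im]

lemma aux_int_damped {y : ℝ} (hy : 0 < y) :
    IntegrableOn (fun t : ℝ => Real.exp (-y * t - t^2/2)) (Ioi 0) := by
  refine Integrable.mono' aux_gauss_int.integrableOn ?_ ?_
  · exact (Real.continuous_exp.comp (by fun_prop)).aestronglyMeasurable
  · rw [ae_restrict_iff' measurableSet_Ioi]
    filter_upwards with t ht
    rw [Real.norm_eq_abs, abs_of_pos (Real.exp_pos _)]
    apply Real.exp_le_exp.mpr
    nlinarith [le_of_lt (mem_Ioi.mp ht)]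

lemma norm_plasmaZ_lt {ζ : ℂ} (hζ : 0 < ζ.im) : ‖plasmaZ ζ‖ < Real.sqrt (π/2) := by
  rw [plasmaZ_repr hζ, norm_mul, Complex.norm_I, one_mul]
  have step1 : ‖∫ t in Ioi (0:ℝ), Complex.exp (Complex.I * ζ * t - (t:ℂ)^2/2)‖
      ≤ ∫ t in Ioi (0:ℝ), Real.exp (-ζ.im * t - t^2/2) := by
    refine norm_integral_le_of_norm_le (aux_int_damped hζ) ?_
    filter_upwards with t
    rw [aux_norm_integrand]
  have step2 : (∫ t in Ioi (0:ℝ), Real.exp (-ζ.im * t - t^2/2))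
      < ∫ t in Ioi (0:ℝ), Real.exp (-t^2/2) := by
    rw [← sub_pos, ← integral_sub aux_gauss_int.integrableOn (aux_int_damped hζ)]
    have hnn : 0 ≤ᶠ[ae (volume.restrict (Ioi (0:ℝ)))]
        fun t => Real.exp (-t^2/2) - Real.exp (-ζ.im * t - t^2/2) := by
      refine (ae_restrict_iff' measurableSet_Ioi).mpr ?_
      filter_upwards with t ht
      have : Real.exp (-ζ.im * t - t^2/2) ≤ Real.exp (-t^2/2) := by
        apply Real.exp_le_exp.mpr
        nlinarith [le_of_lt (mem_Ioi.mp ht)]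
      simp only [Pi.zero_apply]
      linarith
    rw [setIntegral_pos_iff_support_of_nonneg_ae hnn
      (aux_gauss_int.integrableOn.sub (aux_int_damped hζ))]
    · have hsub : Ioi (0:ℝ) ⊆ Function.support
          (fun t => Real.exp (-t^2/2) - Real.exp (-ζ.im * t - t^2/2)) := by
        intro t ht
        have : Real.exp (-ζ.im * t - t^2/2) < Real.exp (-t^2/2) := by
          apply Real.exp_lt_exp.mpr
          nlinarith [mem_Ioi.mp ht]
        simp only [Function.mem_support]
        intro h
        linarith
      calc (0:ENNReal) < volume (Ioi (0:ℝ)) := by simp [Real.volume_Ioi]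
        _ ≤ volume (Function.support (fun t => Real.exp (-t^2/2)
              - Real.exp (-ζ.im * t - t^2/2)) ∩ Ioi 0) := by
            apply measure_mono
            exact fun t ht => ⟨hsub ht, ht⟩
  calc ‖∫ t in Ioi (0:ℝ), Complex.exp (Complex.I * ζ * t - (t:ℂ)^2/2)‖
      ≤ ∫ t in Ioi (0:ℝ), Real.exp (-ζ.im * t - t^2/2) := step1
    _ < ∫ t in Ioi (0:ℝ), Real.exp (-t^2/2) := step2
    _ = Real.sqrt (π/2) := aux_gauss_val

lemma plasmaZ_tendsto :
    Tendsto (fun ζ => ‖plasmaZ ζ‖) (nhdsWithin 0 {ζ : ℂ | 0 < ζ.im})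
      (nhds (Real.sqrt (π / 2))) := by
  set l := nhdsWithin (0:ℂ) {ζ : ℂ | 0 < ζ.im} with hl
  have hlim : ∫ t in Ioi (0:ℝ), Complex.exp (Complex.I * (0:ℂ) * t - (t:ℂ)^2/2)
      = ((Real.sqrt (π/2) : ℝ):ℂ) := by
    rw [← aux_gauss_val,
      show ((∫ t in Ioi (0:ℝ), Real.exp (-t^2/2) : ℝ) : ℂ)
        = ∫ t in Ioi (0:ℝ), ((Real.exp (-t^2/2) : ℝ) : ℂ) from (integral_ofReal (𝕜 := ℂ)).symm]
    apply setIntegral_congr_fun measurableSet_Ioi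
    intro t _
    show Complex.exp (Complex.I * 0 * t - (t:ℂ)^2/2) = ((Real.exp (-t^2/2) : ℝ):ℂ)
    rw [show Complex.I * 0 * t - (t:ℂ)^2/2 = (((-t^2/2 : ℝ)):ℂ) by push_cast; ring,
      ← Complex.ofReal_exp]
  have hInt : Tendsto (fun ζ : ℂ => ∫ t in Ioi (0:ℝ),
      Complex.exp (Complex.I * ζ * t - (t:ℂ)^2/2)) l (𝓝 (((Real.sqrt (π/2) : ℝ):ℂ))) := by
    rw [← hlim]
    apply tendsto_integral_filter_of_dominated_convergence (bound := fun t => Real.exp (-t^2/2))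
    · filter_upwards with ζ
      exact (Continuous.aestronglyMeasurable (by fun_prop))
    · apply eventually_nhdsWithin_of_forall
      intro ζ hζ
      rw [ae_restrict_iff' measurableSet_Ioi]
      filter_upwards with t ht
      rw [aux_norm_integrand]
      apply Real.exp_le_exp.mpr
      have h1 : 0 < ζ.im := hζ
      have h2 : 0 < t := ht
      nlinarith
    · exact aux_gauss_int.integrableOn
    · filter_upwards with t
      have hc : Continuous (fun ζ : ℂ => Complex.exp (Complex.I * ζ * t - (t:ℂ)^2/2)) := by
        fun_prop
      exact (hc.tendsto 0).mono_left nhdsWithin_le_nhds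
  have hnorm : Tendsto (fun ζ : ℂ => ‖Complex.I * ∫ t in Ioi (0:ℝ),
      Complex.exp (Complex.I * ζ * t - (t:ℂ)^2/2)‖) l (𝓝 (Real.sqrt (π/2))) := by
    have h := ((tendsto_const_nhds (x := Complex.I)).mul hInt).norm
    have h2 : ‖Complex.I * (((Real.sqrt (π/2)):ℝ):ℂ)‖ = Real.sqrt (π/2) := by
      rw [norm_mul, Complex.norm_I, one_mul, Complex.norm_real, Real.norm_eq_abs,
        _root_.abs_of_nonneg (Real.sqrt_nonneg _)]
    rwa [h2] at h
  refine hnorm.congr' ?_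
  apply eventually_nhdsWithin_of_forall
  intro ζ hζ
  exact (congrArg norm (plasmaZ_repr hζ)).symm

/-- On the open upper half-plane `|Z| ≤ √(π/2)`, the bound being strict there; the value
`√(π/2)` is attained only in the boundary limit `ζ → 0`. -/
theorem plasmaZ_bound :
    (∀ ζ : ℂ, 0 < ζ.im → ‖plasmaZ ζ‖ ≤ Real.sqrt (π / 2)) ∧
    (∀ ζ : ℂ, 0 < ζ.im → ‖plasmaZ ζ‖ < Real.sqrt (π / 2)) ∧
    Tendsto (fun ζ => ‖plasmaZ ζ‖) (nhdsWithin 0 {ζ : ℂ | 0 < ζ.im})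
      (nhds (Real.sqrt (π / 2))) := by
  refine ⟨fun ζ h => (by simpa [show π/2 = π/2 by ring] using (norm_plasmaZ_lt h).le),
    fun ζ h => by simpa using norm_plasmaZ_lt h, plasmaZ_tendsto⟩
end

section
/- The quartic polynomial 132 s^4 - 635 s^3 + 1007 s^2 - 608 s + 130 has no roots in the interval (0,1); consequently P_2(s) = -(s-1)^3 s^2 (132 s^4 - 635 s^3 + 1007 s^2 - 608 s + 130) is nonnegative for s ∈ (0,1). -/
lemma quartic_pos (s : ℝ) (hs : s ∈ Set.Ioo (0:ℝ) 1) :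
    0 < 132*s^4 - 635*s^3 + 1007*s^2 - 608*s + 130 := by
  obtain ⟨h0, h1⟩ := hs
  nlinarith [sq_nonneg (s^2 - 12/5*s + 2267/2310), mul_pos h0 (sub_pos.mpr h1), mul_pos (mul_pos h0 h0) (sub_pos.mpr h1)]

/-- The quartic factor of `P₂` has no roots in `(0,1)`, hence
`P₂(s) = -(s-1)³ s² (132s⁴ - 635s³ + 1007s² - 608s + 130)` is nonnegative on `(0,1)`. -/
theorem P2_quartic_no_roots_and_nonneg :
    (∀ s : ℝ, s ∈ Set.Ioo (0:ℝ) 1 → 132*s^4 - 635*s^3 + 1007*s^2 - 608*s + 130 ≠ 0) ∧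
    (∀ s : ℝ, s ∈ Set.Ioo (0:ℝ) 1 →
      0 ≤ -(s-1)^3 * s^2 * (132*s^4 - 635*s^3 + 1007*s^2 - 608*s + 130)) := by
  constructor
  · intro s hs; exact ne_of_gt (quartic_pos s hs)
  · intro s hs
    obtain ⟨h0, h1⟩ := hs
    have hq := quartic_pos s ⟨h0, h1⟩
    have h3 : 0 < (1 - s)^3 := pow_pos (sub_pos.mpr h1) 3
    nlinarith [mul_pos (mul_pos h3 (pow_pos h0 2)) hq]
end
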